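/- Let n be a positive integer, q a prime power, and let q − 1 = ν₀ω₀ and q + 1 = ν₁ω₁ be the n-decompositions (rad(νᵢ) | rad(n), gcd(ωᵢ, n) = 1). Then the number of T_n-periodic points in F_q equals (ω₀ + ω₁)/2. -/

import Mathlib

open Polynomial

/-- Roots of `y² - (α+α⁻¹) y + 1` are `α` and `α⁻¹`. -/
theorem cheb_quad_root {K : Type*} [Field K] (α : Kˣ) (y : K)
    (hy : y ^ 2 - ((α : K) + (↑α)⁻¹) * y + 1 = 0) : y = α ∨ y = (↑α)⁻¹ := by
  have hα : (α : K) ≠ 0 := α.ne_zero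
  have key : (y - α) * (y - (↑α)⁻¹) = 0 := by
    field_simp
    field_simp at hy
    linear_combination hy
  rcases mul_eq_zero.1 key with h | h
  · exact Or.inl (sub_eq_zero.1 h)
  · exact Or.inr (sub_eq_zero.1 h)

theorem cheb_add_inv_inj {K : Type*} [Field K] {α β : Kˣ}
    (h : (β : K) + (↑β)⁻¹ = (α : K) + (↑α)⁻¹) : β = α ∨ β = α⁻¹ := by
  have hβ : (β : K) ≠ 0 := β.ne_zero
  have : ((β : K)) ^ 2 - ((α : K) + (↑α)⁻¹) * β + 1 = 0 := by
    rw [← h]; field_simp; ring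
  rcases cheb_quad_root α (β : K) this with h' | h'
  · exact Or.inl (Units.ext h')
  · right; apply Units.ext; rw [h']; simp

theorem cheb_periodic_pow_iff {G : Type*} [Group G] {α : G} (hα : 0 < orderOf α)
    {n : ℕ} (hn : 0 < n) :
    (∃ k > 0, α ^ n ^ k = α ∨ α ^ n ^ k = α⁻¹) ↔ Nat.Coprime (orderOf α) n := by
  set d := orderOf α with hd
  constructor
  · rintro ⟨k, hk, h | h⟩ <;>
      [ (have hdvd : d ∣ n ^ k - 1 := by
          have hmod : n ^ k ≡ 1 [MOD d] :=
            (pow_eq_pow_iff_modEq (x := α) (n := n ^ k) (m := 1)).1 (by simpa using h)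
          exact (Nat.modEq_iff_dvd' (Nat.one_le_pow _ _ hn)).1 hmod.symm);
        (have hdvd : d ∣ n ^ k + 1 := by
          apply orderOf_dvd_of_pow_eq_one
          rw [pow_succ, h]; simp) ] <;>
    · rw [Nat.coprime_comm]
      by_contra hc
      obtain ⟨p, hp, hpd⟩ := Nat.exists_prime_and_dvd hc
      have h1 : p ∣ n := hpd.trans (Nat.gcd_dvd_left _ _)
      have h2 := (hpd.trans (Nat.gcd_dvd_right _ _)).trans hdvd
      have h3 : p ∣ n ^ k := h1.trans (dvd_pow_self n hk.ne')
      have hle : 1 ≤ n ^ k := Nat.one_le_pow _ _ hn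
      have hone : p ∣ 1 := by
        first
        | (have := Nat.dvd_sub h3 h2
           have heq : n ^ k - (n ^ k - 1) = 1 := by omega
           rwa [heq] at this)
        | (have := Nat.dvd_sub h2 h3
           have heq : n ^ k + 1 - n ^ k = 1 := by omega
           rwa [heq] at this)
      exact hp.one_lt.ne' (Nat.dvd_one.1 hone)
  · intro hco
    haveI : NeZero d := ⟨hα.ne'⟩
    set u : (ZMod d)ˣ := ZMod.unitOfCoprime n (hco.symm)
    refine ⟨orderOf u, orderOf_pos u, Or.inl ?_⟩
    have hu : u ^ orderOf u = 1 := pow_orderOf_eq_one u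
    have hcast : ((n ^ orderOf u : ℕ) : ZMod d) = ((1 : ℕ) : ZMod d) := by
      push_cast
      calc ((n : ZMod d)) ^ orderOf u = ((u : ZMod d)) ^ orderOf u := by
            rw [ZMod.coe_unitOfCoprime]
        _ = ((u ^ orderOf u : (ZMod d)ˣ) : ZMod d) := by push_cast; ring
        _ = 1 := by rw [hu]; simp
    have hmod : n ^ orderOf u ≡ 1 [MOD d] := (ZMod.natCast_eq_natCast_iff _ _ _).1 hcast
    have := (pow_eq_pow_iff_modEq (x := α) (n := n ^ orderOf u) (m := 1)).2 hmod
    simpa using this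

theorem cheb_coprime_iff_dvd {d ν ω n : ℕ} (hd : d ∣ ν * ω)
    (hν : ∀ p : ℕ, p.Prime → p ∣ ν → p ∣ n) (hω : Nat.Coprime ω n) :
    Nat.Coprime d n ↔ d ∣ ω := by
  constructor
  · intro hdn
    have hcop : Nat.Coprime d ν := by
      by_contra hc
      obtain ⟨p, hp, hpd⟩ := Nat.exists_prime_and_dvd hc
      have h1 : p ∣ d := hpd.trans (Nat.gcd_dvd_left _ _)
      have h2 : p ∣ n := hν p hp (hpd.trans (Nat.gcd_dvd_right _ _))
      have : p ∣ 1 := Nat.dvd_gcd h1 h2 |>.trans hdn.dvd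
      exact hp.one_lt.ne' (Nat.dvd_one.1 this)
    exact hcop.dvd_of_dvd_mul_left hd
  · intro hdω
    exact Nat.Coprime.coprime_dvd_left hdω hω

/-- The map `α ↦ α + α⁻¹` is 2-to-1, counting version. -/
theorem cheb_two_mul_ncard_image {K : Type*} [Field K] (U : Set Kˣ) (hU : U.Finite)
    (hinv : ∀ α ∈ U, α⁻¹ ∈ U) :
    2 * ((fun α : Kˣ => (α : K) + (↑α)⁻¹) '' U).ncard =
      U.ncard + (U ∩ {α : Kˣ | α⁻¹ = α}).ncard := by
  classical
  set e : Kˣ → K := fun α => (α : K) + (↑α)⁻¹ with he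
  have hee : ∀ α : Kˣ, e α⁻¹ = e α := by
    intro α; simp [he, add_comm]
  set U₂ : Set Kˣ := U ∩ {α : Kˣ | α⁻¹ = α} with hU₂
  set U₁ : Set Kˣ := U \ {α : Kˣ | α⁻¹ = α} with hU₁
  have hU₂f : U₂.Finite := hU.inter_of_left _
  have hU₁f : U₁.Finite := hU.diff
  have hsplit : U = U₁ ∪ U₂ := by
    rw [hU₁, hU₂]; simp [Set.diff_union_inter]
  -- image decomposition
  have himg : e '' U = e '' U₁ ∪ e '' U₂ := by
    rw [hsplit, Set.image_union]
  have hdisj : Disjoint (e '' U₁) (e '' U₂) := by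
    rw [Set.disjoint_left]
    rintro x ⟨α, hα, rfl⟩ ⟨β, hβ, hβα⟩
    rcases cheb_add_inv_inj (K := K) (α := α) (β := β) hβα with rfl | rfl
    · exact hα.2 hβ.2
    · have : α⁻¹⁻¹ = α⁻¹ := hβ.2
      exact hα.2 (by simpa using this.symm)
  have hinj₂ : Set.InjOn e U₂ := by
    rintro α hα β hβ hab
    rcases cheb_add_inv_inj (K := K) (α := β) (β := α) hab with rfl | rfl
    · rfl
    · exact hβ.2
  have hU₁inv : ∀ α ∈ U₁, α⁻¹ ∈ U₁ := by
    rintro α ⟨hαU, hαfix⟩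
    refine ⟨hinv α hαU, fun h => hαfix ?_⟩
    simpa using (h : α⁻¹⁻¹ = α⁻¹).symm
  have hcount₁ : U₁.ncard = 2 * (e '' U₁).ncard := by
    set T := hU₁f.toFinset with hT
    have hsum : T.card = ∑ b ∈ T.image e, (T.filter (fun α => e α = b)).card :=
      Finset.card_eq_sum_card_fiberwise (fun α hα => Finset.mem_image_of_mem e hα)
    have hfib : ∀ b ∈ T.image e, (T.filter (fun α => e α = b)).card = 2 := by
      intro b hb
      obtain ⟨α, hαT, rfl⟩ := Finset.mem_image.1 hb
      have hαU₁ : α ∈ U₁ := (Set.Finite.mem_toFinset _).1 hαT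
      have hfilter : T.filter (fun β => e β = e α) = {α, α⁻¹} := by
        ext β
        simp only [Finset.mem_filter, Finset.mem_insert, Finset.mem_singleton]
        constructor
        · rintro ⟨hβT, hβe⟩
          exact cheb_add_inv_inj hβe
        · rintro (rfl | rfl)
          · exact ⟨hαT, rfl⟩
          · exact ⟨(Set.Finite.mem_toFinset _).2 (hU₁inv α hαU₁), hee α⟩
      rw [hfilter]
      rw [Finset.card_insert_of_notMem, Finset.card_singleton]
      simp only [Finset.mem_singleton]
      intro hcontra
      exact hαU₁.2 hcontra.symm
    have himcard : (e '' U₁).ncard = (T.image e).card := by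
      rw [← Set.Finite.coe_toFinset hU₁f, ← Finset.coe_image, Set.ncard_coe_finset]
    have hTcard : U₁.ncard = T.card := Set.ncard_eq_toFinset_card _ hU₁f
    rw [hTcard, hsum, Finset.sum_congr rfl hfib, Finset.sum_const, smul_eq_mul, himcard,
      mul_comm]
  have hdisj' : Disjoint U₁ U₂ := by
    rw [Set.disjoint_left]
    rintro α hα₁ hα₂
    exact hα₁.2 hα₂.2
  have himgcard : (e '' U).ncard = (e '' U₁).ncard + (e '' U₂).ncard := by
    rw [himg, Set.ncard_union_eq hdisj (hU₁f.image e) (hU₂f.image e)]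
  have h₂ : (e '' U₂).ncard = U₂.ncard := Set.ncard_image_of_injOn hinj₂
  have hUcard : U.ncard = U₁.ncard + U₂.ncard := by
    rw [hsplit, Set.ncard_union_eq hdisj' hU₁f hU₂f]
  rw [himgcard, hUcard]
  omega

/-- Let `q - 1 = ν₀·ω₀` and `q + 1 = ν₁·ω₁` be the `n`-decompositions (every prime of
`νᵢ` divides `n`, and `gcd(ωᵢ, n) = 1`).  Then the number of periodic points of the
Chebyshev map `T_n` on the field `F_q` equals `(ω₀ + ω₁)/2`. -/
theorem chebyshev_card_periodic_points (n q ν₀ ω₀ ν₁ ω₁ : ℕ) (hn : 0 < n)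
    (F : Type*) [Field F] [Fintype F] (hF : Fintype.card F = q)
    (h₀ : q - 1 = ν₀ * ω₀) (hν₀ : ∀ p : ℕ, p.Prime → p ∣ ν₀ → p ∣ n)
    (hω₀ : Nat.Coprime ω₀ n)
    (h₁ : q + 1 = ν₁ * ω₁) (hν₁ : ∀ p : ℕ, p.Prime → p ∣ ν₁ → p ∣ n)
    (hω₁ : Nat.Coprime ω₁ n) :
    Nat.card {a : F // ∃ k > 0,
        (fun x : F => (Polynomial.dickson 1 (1 : F) n).eval x)^[k] a = a} =
      (ω₀ + ω₁) / 2 := by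
  classical
  have hq2 : 2 ≤ q := by rw [← hF]; exact Fintype.one_lt_card
  set p := ringChar F with hpdef
  haveI hcharF : CharP F p := ringChar.charP F
  have hp : p.Prime := CharP.char_is_prime F p
  haveI : Fact p.Prime := ⟨hp⟩
  obtain ⟨f, -, hcard⟩ := FiniteField.card F p
  have hq : q = p ^ (f : ℕ) := by rw [← hF, hcard]
  set K := AlgebraicClosure F with hK
  set φ := algebraMap F K with hφ
  have hφinj : Function.Injective φ := (algebraMap F K).injective
  haveI : CharP K p := charP_of_injective_algebraMap hφinj p
  -- Frobenius is additive
  have hfrob : ∀ x y : K, (x + y) ^ q = x ^ q + y ^ q := by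
    intro x y; rw [hq]; exact add_pow_char_pow x y p (f : ℕ)
  have hφfix : ∀ a : F, (φ a) ^ q = φ a := by
    intro a; rw [← map_pow, ← hF, FiniteField.pow_card]
  -- elements fixed by Frobenius are in the base field
  have hfixmem : ∀ x : K, x ^ q = x → ∃ a : F, φ a = x := by
    intro x hx
    set P : Polynomial K := Polynomial.X ^ q - Polynomial.X with hP
    have hdeg : P.degree = q := by
      rw [hP]
      rw [Polynomial.degree_sub_eq_left_of_degree_lt]
      · exact Polynomial.degree_X_pow q
      · rw [Polynomial.degree_X_pow, Polynomial.degree_X]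
        exact_mod_cast by omega
    have hPne : P ≠ 0 := fun h => by simp [h] at hdeg
    have hroot : ∀ a : F, φ a ∈ P.roots.toFinset := by
      intro a
      rw [Multiset.mem_toFinset, Polynomial.mem_roots hPne]
      simp [hP, Polynomial.IsRoot, hφfix a]
    have hsub : Finset.univ.image φ ⊆ P.roots.toFinset := by
      intro y hy
      obtain ⟨a, -, rfl⟩ := Finset.mem_image.1 hy
      exact hroot a
    have hcardim : (Finset.univ.image φ).card = q := by
      rw [Finset.card_image_of_injective _ hφinj, Finset.card_univ, hF]
    have hcardroots : P.roots.toFinset.card ≤ q := by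
      calc P.roots.toFinset.card ≤ Multiset.card P.roots := Multiset.toFinset_card_le _
        _ ≤ P.natDegree := P.card_roots'
        _ = q := Polynomial.natDegree_eq_of_degree_eq_some hdeg
    have heq : Finset.univ.image φ = P.roots.toFinset :=
      Finset.eq_of_subset_of_card_le hsub (by omega)
    have hxmem : x ∈ P.roots.toFinset := by
      rw [Multiset.mem_toFinset, Polynomial.mem_roots hPne]
      simp [hP, Polynomial.IsRoot, hx]
    rw [← heq] at hxmem
    obtain ⟨a, -, ha⟩ := Finset.mem_image.1 hxmem
    exact ⟨a, ha⟩
  -- lifting a ∈ F to a unit α with α + α⁻¹ = a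
  have hlift : ∀ a : F, ∃ α : Kˣ, ((α : K) + (↑α)⁻¹ = φ a) ∧
      (α ^ (q - 1) = 1 ∨ α ^ (q + 1) = 1) := by
    intro a
    have hdeg : (Polynomial.X ^ 2 - Polynomial.C (φ a) * Polynomial.X + 1 :
        Polynomial K).degree ≠ 0 := by
      have : (Polynomial.X ^ 2 - Polynomial.C (φ a) * Polynomial.X + 1 :
          Polynomial K).degree = 2 := by
        compute_degree!
      rw [this]; norm_num
    obtain ⟨x, hx⟩ := IsAlgClosed.exists_root _ hdeg
    have heq : x ^ 2 - (φ a) * x + 1 = 0 := by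
      simpa [Polynomial.IsRoot] using hx
    have hx0 : x ≠ 0 := by
      rintro rfl; simp at heq
    set α : Kˣ := Units.mk0 x hx0 with hα
    have hαval : (α : K) = x := rfl
    have hsum : (α : K) + (↑α)⁻¹ = φ a := by
      rw [hαval]
      have h1 : x * x⁻¹ = 1 := mul_inv_cancel₀ hx0
      linear_combination x⁻¹ * heq + (φ a - x) * h1
    have heqq : (x ^ q) ^ 2 - (φ a) * (x ^ q) + 1 = 0 := by
      have h2 := congrArg (iterateFrobenius K p (f : ℕ)) heq
      simp only [map_add, map_sub, map_mul, map_pow, map_one, map_zero,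
        iterateFrobenius_def] at h2
      rw [← hq] at h2
      rwa [hφfix a] at h2
    rw [← hsum] at heqq
    have hcase := cheb_quad_root α (x ^ q) heqq
    refine ⟨α, hsum, ?_⟩
    rcases hcase with h | h
    · left
      have hαq : α ^ q = α := Units.ext (by rw [Units.val_pow_eq_pow_val, hαval]; exact h)
      have : α ^ (q - 1) * α = 1 * α := by
        rw [← pow_succ, Nat.sub_add_cancel (by omega), one_mul, hαq]
      exact mul_right_cancel this
    · right
      have hαq : α ^ q = α⁻¹ := Units.ext (by
        rw [Units.val_pow_eq_pow_val, hαval]; simpa using h)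
      rw [pow_succ, hαq, inv_mul_cancel]
  -- evaluation commutes with φ
  have hmapeval : ∀ b : F, φ ((Polynomial.dickson 1 (1 : F) n).eval b) =
      (Polynomial.dickson 1 (1 : K) n).eval (φ b) := by
    intro b
    calc φ ((Polynomial.dickson 1 (1 : F) n).eval b)
        = (Polynomial.dickson 1 (1 : F) n).eval₂ φ (φ b) :=
          (Polynomial.eval₂_at_apply φ b).symm
      _ = ((Polynomial.dickson 1 (1 : F) n).map φ).eval (φ b) :=
          (Polynomial.eval_map φ (φ b)).symm
      _ = (Polynomial.dickson 1 (1 : K) n).eval (φ b) := by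
          rw [Polynomial.map_dickson, map_one]
  set Tf : F → F := fun x : F => (Polynomial.dickson 1 (1 : F) n).eval x with hTf
  -- the iterate formula
  have hiter : ∀ (α : Kˣ) (a : F), (α : K) + (↑α)⁻¹ = φ a →
      ∀ k : ℕ, φ (Tf^[k] a) = ((α ^ n ^ k : Kˣ) : K) + (((α ^ n ^ k : Kˣ) : K))⁻¹ := by
    intro α a ha k
    induction k with
    | zero => simpa using ha.symm
    | succ k ih =>
      rw [Function.iterate_succ_apply']
      have : Tf (Tf^[k] a) = (Polynomial.dickson 1 (1 : F) n).eval (Tf^[k] a) := rfl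
      rw [this, hmapeval, ih]
      rw [Polynomial.dickson_one_one_eval_add_inv _ _
        (mul_inv_cancel₀ (Units.ne_zero _)) n]
      rw [inv_pow, ← Units.val_pow_eq_pow_val, ← pow_mul, ← pow_succ]
  -- arithmetic facts
  have hω₀pos : 0 < ω₀ := by
    rcases Nat.eq_zero_or_pos ω₀ with h | h
    · rw [h, mul_zero] at h₀; omega
    · exact h
  have hω₁pos : 0 < ω₁ := by
    rcases Nat.eq_zero_or_pos ω₁ with h | h
    · rw [h, mul_zero] at h₁; omega
    · exact h
  have hω₀dvd : ω₀ ∣ q - 1 := ⟨ν₀, by rw [h₀]; ring⟩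
  have hω₁dvd : ω₁ ∣ q + 1 := ⟨ν₁, by rw [h₁]; ring⟩
  have hpq : p ∣ q := by
    rw [hq]; exact dvd_pow_self p (by exact_mod_cast f.ne_zero)
  have hpω₀ : ¬ p ∣ ω₀ := by
    intro h
    have h' : p ∣ q - 1 := h.trans hω₀dvd
    have := Nat.dvd_sub hpq h'
    rw [show q - (q - 1) = 1 by omega] at this
    exact hp.one_lt.ne' (Nat.dvd_one.1 this)
  have hpω₁ : ¬ p ∣ ω₁ := by
    intro h
    have h' : p ∣ q + 1 := h.trans hω₁dvd
    have := Nat.dvd_sub h' hpq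
    rw [show q + 1 - q = 1 by omega] at this
    exact hp.one_lt.ne' (Nat.dvd_one.1 this)
  -- the relevant sets
  set e : Kˣ → K := fun α => (α : K) + (↑α)⁻¹ with he
  set U : Set Kˣ := {α : Kˣ | α ^ ω₀ = 1 ∨ α ^ ω₁ = 1} with hU
  set S : Set F := {a : F | ∃ k > 0, Tf^[k] a = a} with hS
  -- the key set identity
  have hSU : φ '' S = e '' U := by
    ext x
    constructor
    · rintro ⟨a, ⟨k, hk, hka⟩, rfl⟩
      obtain ⟨α, hα, hcase⟩ := hlift a
      have hordpos : 0 < orderOf α := by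
        rcases hcase with h | h
        · exact Nat.pos_of_dvd_of_pos (orderOf_dvd_of_pow_eq_one h) (by omega)
        · exact Nat.pos_of_dvd_of_pos (orderOf_dvd_of_pow_eq_one h) (by omega)
      have hper : α ^ n ^ k = α ∨ α ^ n ^ k = α⁻¹ := by
        have h1 := hiter α a hα k
        rw [hka, ← hα] at h1
        exact cheb_add_inv_inj h1.symm
      have hco : Nat.Coprime (orderOf α) n := (cheb_periodic_pow_iff hordpos hn).1 ⟨k, hk, hper⟩
      refine ⟨α, ?_, hα⟩
      rcases hcase with h | h
      · left
        have hdvd : orderOf α ∣ ν₀ * ω₀ := h₀ ▸ orderOf_dvd_of_pow_eq_one h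
        exact orderOf_dvd_iff_pow_eq_one.1 ((cheb_coprime_iff_dvd hdvd hν₀ hω₀).1 hco)
      · right
        have hdvd : orderOf α ∣ ν₁ * ω₁ := h₁ ▸ orderOf_dvd_of_pow_eq_one h
        exact orderOf_dvd_iff_pow_eq_one.1 ((cheb_coprime_iff_dvd hdvd hν₁ hω₁).1 hco)
    · rintro ⟨α, hα, rfl⟩
      have hαord : orderOf α ∣ ω₀ ∨ orderOf α ∣ ω₁ :=
        hα.imp orderOf_dvd_of_pow_eq_one orderOf_dvd_of_pow_eq_one
      have hordpos : 0 < orderOf α := by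
        rcases hαord with h | h
        · exact Nat.pos_of_dvd_of_pos h hω₀pos
        · exact Nat.pos_of_dvd_of_pos h hω₁pos
      have hq1 : α ^ (q - 1) = 1 ∨ α ^ (q + 1) = 1 := by
        rcases hαord with h | h
        · exact Or.inl (orderOf_dvd_iff_pow_eq_one.1 (h.trans hω₀dvd))
        · exact Or.inr (orderOf_dvd_iff_pow_eq_one.1 (h.trans hω₁dvd))
      have hfixed : (e α) ^ q = e α := by
        rw [he]
        simp only []
        rw [hfrob]
        rcases hq1 with h | h
        · have hu : α ^ q = α := by
            conv_lhs => rw [show q = (q - 1) + 1 by omega]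
            rw [pow_succ, h, one_mul]
          rw [← Units.val_pow_eq_pow_val, inv_pow, ← Units.val_pow_eq_pow_val, hu]
        · have hu : α ^ q = α⁻¹ := by
            have h2 : α ^ q * α = 1 := by rw [← pow_succ, h]
            exact eq_inv_of_mul_eq_one_left h2
          rw [← Units.val_pow_eq_pow_val, inv_pow, ← Units.val_pow_eq_pow_val, hu]
          simp [add_comm]
          exact (add_comm _ _).trans (congrArg (· + _) (inv_inv (α : K)))
      obtain ⟨a, ha⟩ := hfixmem _ hfixed
      refine ⟨a, ?_, ha⟩
      have hco : Nat.Coprime (orderOf α) n := by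
        rcases hαord with h | h
        · exact Nat.Coprime.coprime_dvd_left h hω₀
        · exact Nat.Coprime.coprime_dvd_left h hω₁
      obtain ⟨k, hk, hper⟩ := (cheb_periodic_pow_iff hordpos hn).2 hco
      refine ⟨k, hk, hφinj ?_⟩
      rw [hiter α a ha.symm k]
      rcases hper with h | h
      · rw [h, ha]
      · rw [h, ha]
        simp [he, add_comm]
        exact (add_comm _ _).trans (congrArg (· + _) (inv_inv (α : K)))
  -- counting roots of unity
  have hcardroots : ∀ m : ℕ, m ≠ 0 → ¬ p ∣ m →
      ({α : Kˣ | α ^ m = 1} : Set Kˣ).ncard = m := by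
    intro m hm hpm
    haveI : NeZero m := ⟨hm⟩
    haveI : NeZero ((m : K)) := ⟨fun h => hpm ((CharP.cast_eq_zero_iff K p m).1 h)⟩
    have hset : {α : Kˣ | α ^ m = 1} = (rootsOfUnity m K : Set Kˣ) := by
      ext α; simp [mem_rootsOfUnity]
    rw [hset, ← Nat.card_coe_set_eq, SetLike.coe_sort_coe]
    exact HasEnoughRootsOfUnity.natCard_rootsOfUnity K m
  have hfinroots : ∀ m : ℕ, m ≠ 0 → ¬ p ∣ m →
      ({α : Kˣ | α ^ m = 1} : Set Kˣ).Finite := by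
    intro m hm hpm
    haveI : NeZero m := ⟨hm⟩
    haveI : NeZero ((m : K)) := ⟨fun h => hpm ((CharP.cast_eq_zero_iff K p m).1 h)⟩
    have hset : {α : Kˣ | α ^ m = 1} = (rootsOfUnity m K : Set Kˣ) := by
      ext α; simp [mem_rootsOfUnity]
    rw [hset]
    haveI : Finite ((rootsOfUnity m K : Set Kˣ) : Type _) :=
      HasEnoughRootsOfUnity.finite_rootsOfUnity K m
    exact Set.toFinite _
  -- finiteness and closure of U
  have hA := hfinroots ω₀ hω₀pos.ne' hpω₀
  have hB := hfinroots ω₁ hω₁pos.ne' hpω₁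
  have hUeq : U = {α : Kˣ | α ^ ω₀ = 1} ∪ {α : Kˣ | α ^ ω₁ = 1} := by
    ext α; simp [hU, Set.mem_union]
  have hUfin : U.Finite := by rw [hUeq]; exact hA.union hB
  have hUinv : ∀ α ∈ U, α⁻¹ ∈ U := by
    rintro α (h | h)
    · exact Or.inl (by rw [inv_pow, h, inv_one])
    · exact Or.inr (by rw [inv_pow, h, inv_one])
  set g := Nat.gcd ω₀ ω₁ with hg
  have hgpos : 0 < g := Nat.gcd_pos_of_pos_left _ hω₀pos
  have hgdvdω₀ : g ∣ ω₀ := Nat.gcd_dvd_left _ _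
  have hpg : ¬ p ∣ g := fun h => hpω₀ (h.trans hgdvdω₀)
  have hg2 : g ∣ 2 := by
    have hga : g ∣ q - 1 := hgdvdω₀.trans hω₀dvd
    have hgb : g ∣ q + 1 := (Nat.gcd_dvd_right _ _).trans hω₁dvd
    have := Nat.dvd_sub hgb hga
    rwa [show q + 1 - (q - 1) = 2 by omega] at this
  have hg12 : g = 1 ∨ g = 2 := (Nat.dvd_prime Nat.prime_two).1 hg2
  have hinter : {α : Kˣ | α ^ ω₀ = 1} ∩ {α : Kˣ | α ^ ω₁ = 1} = {α : Kˣ | α ^ g = 1} := by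
    ext α
    simp only [Set.mem_inter_iff, Set.mem_setOf_eq, ← orderOf_dvd_iff_pow_eq_one]
    exact ⟨fun ⟨h1, h2⟩ => Nat.dvd_gcd h1 h2,
      fun h => ⟨h.trans (Nat.gcd_dvd_left _ _), h.trans (Nat.gcd_dvd_right _ _)⟩⟩
  have hUncard : U.ncard + g = ω₀ + ω₁ := by
    have hcount := Set.ncard_union_add_ncard_inter _ _ hA hB
    rw [hinter, hcardroots g hgpos.ne' hpg, hcardroots ω₀ hω₀pos.ne' hpω₀,
      hcardroots ω₁ hω₁pos.ne' hpω₁, ← hUeq] at hcount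
    exact hcount
  have hparity : (2 ∣ ω₀ ↔ 2 ∣ ω₁) := by
    constructor
    · intro h2
      have h2n : ¬ 2 ∣ n := fun hn2 => by
        have := Nat.dvd_gcd h2 hn2
        rw [Nat.Coprime.gcd_eq_one hω₀] at this
        omega
      have hq1even : 2 ∣ q - 1 := h2.trans hω₀dvd
      have hq1even' : 2 ∣ q + 1 := by omega
      rw [h₁] at hq1even'
      rcases (Nat.Prime.dvd_mul Nat.prime_two).1 hq1even' with h | h
      · exact absurd (hν₁ 2 Nat.prime_two h) h2n
      · exact h
    · intro h2
      have h2n : ¬ 2 ∣ n := fun hn2 => by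
        have := Nat.dvd_gcd h2 hn2
        rw [Nat.Coprime.gcd_eq_one hω₁] at this
        omega
      have hq1even : 2 ∣ q + 1 := h2.trans hω₁dvd
      have hq1even' : 2 ∣ q - 1 := by omega
      rw [h₀] at hq1even'
      rcases (Nat.Prime.dvd_mul Nat.prime_two).1 hq1even' with h | h
      · exact absurd (hν₀ 2 Nat.prime_two h) h2n
      · exact h
  have hfixset : {α : Kˣ | α⁻¹ = α} = {α : Kˣ | α ^ 2 = 1} := by
    ext α
    simp only [Set.mem_setOf_eq, pow_two]
    constructor
    · intro h; nth_rewrite 1 [← h]; exact inv_mul_cancel α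
    · intro h; exact inv_eq_of_mul_eq_one_right h
  have hfixcard : (U ∩ {α : Kˣ | α⁻¹ = α}).ncard = g := by
    rw [hfixset]
    rcases hg12 with hg1 | hg2'
    · have hnot2 : ¬ 2 ∣ ω₀ := by
        intro h2
        have h2' : 2 ∣ ω₁ := hparity.1 h2
        have : 2 ∣ g := Nat.dvd_gcd h2 h2'
        omega
      have hnot2' : ¬ 2 ∣ ω₁ := fun h2 => hnot2 (hparity.2 h2)
      have hset1 : U ∩ {α : Kˣ | α ^ 2 = 1} = {1} := by
        ext α
        simp only [Set.mem_inter_iff, Set.mem_setOf_eq, Set.mem_singleton_iff]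
        constructor
        · rintro ⟨hmem, h2⟩
          have hd2 : orderOf α ∣ 2 := orderOf_dvd_of_pow_eq_one h2
          have hdo : orderOf α ∣ ω₀ ∨ orderOf α ∣ ω₁ :=
            hmem.imp orderOf_dvd_of_pow_eq_one orderOf_dvd_of_pow_eq_one
          have h1 : orderOf α = 1 := by
            rcases hdo with h | h
            · have := Nat.dvd_gcd hd2 h
              rw [Nat.Coprime.gcd_eq_one ((Nat.prime_two.coprime_iff_not_dvd).2 hnot2)] at this
              exact Nat.dvd_one.1 this
            · have := Nat.dvd_gcd hd2 h
              rw [Nat.Coprime.gcd_eq_one ((Nat.prime_two.coprime_iff_not_dvd).2 hnot2')] at this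
              exact Nat.dvd_one.1 this
          exact orderOf_eq_one_iff.1 h1
        · rintro rfl
          exact ⟨Or.inl (one_pow _), one_pow _⟩
      rw [hset1, hg1, Set.ncard_singleton]
    · have h2ω₀ : 2 ∣ ω₀ := hg2' ▸ hgdvdω₀
      have hp2 : ¬ p ∣ 2 := by
        intro h
        have hpeq : p = 2 := (Nat.prime_dvd_prime_iff_eq hp Nat.prime_two).1 h
        exact hpω₀ (hpeq ▸ h2ω₀)
      have hsub : {α : Kˣ | α ^ 2 = 1} ⊆ U := by
        intro α h2
        exact Or.inl (orderOf_dvd_iff_pow_eq_one.1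
          ((orderOf_dvd_of_pow_eq_one h2).trans h2ω₀))
      rw [Set.inter_eq_self_of_subset_right hsub, hcardroots 2 (by norm_num) hp2, hg2']
  -- put everything together
  have hmain := cheb_two_mul_ncard_image U hUfin hUinv
  have hgoal : Nat.card {a : F // ∃ k > 0, Tf^[k] a = a} = S.ncard :=
    Nat.card_coe_set_eq S
  have himcard : S.ncard = (e '' U).ncard := by
    rw [← Set.ncard_image_of_injective S hφinj, hSU]
  have h2S : 2 * S.ncard = ω₀ + ω₁ := by
    rw [himcard, hmain, hfixcard]
    omega
  rw [hgoal]
  omega
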